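/- Let R be a commutative ring, I an ideal of R, and f ∈ R. If m ∈ ℕ is such that the saturation I : f^∞ equals I : f^m, then I = (I : f^m) ∩ (I + ⟨f^m⟩). -/
import Mathlib


/-- If the saturation `I : f^∞` equals `I : f^m`, then `I = (I : f^m) ∩ (I + ⟨f^m⟩)`. -/
theorem stmt0 {R : Type*} [CommRing R] (I : Ideal R) (f : R) (m : ℕ)
    (h : (⨆ n : ℕ, I.colon (Ideal.span {f ^ n})) = I.colon (Ideal.span {f ^ m})) :
    I = I.colon (Ideal.span {f ^ m}) ⊓ (I + Ideal.span {f ^ m}) := by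
  apply le_antisymm
  · refine le_inf ?_ ?_
    · intro x hx
      rw [Ideal.mem_colon_span_singleton]
      exact I.mul_mem_right _ hx
    · exact le_sup_left
  · intro x hx
    obtain ⟨hx1, hx2⟩ := Submodule.mem_inf.mp hx
    rw [Ideal.mem_colon_span_singleton] at hx1
    obtain ⟨i, hi, y, hy, rfl⟩ := Submodule.mem_sup.mp hx2
    obtain ⟨r, rfl⟩ := Ideal.mem_span_singleton'.mp hy
    have h2m : r ∈ I.colon (Ideal.span {f ^ (m + m)}) := by
      rw [Ideal.mem_colon_span_singleton, pow_add]
      have heq : r * (f ^ m * f ^ m) = (i + r * f ^ m) * f ^ m - i * f ^ m := by ring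
      rw [heq]
      exact I.sub_mem hx1 (I.mul_mem_right _ hi)
    have hr : r ∈ I.colon (Ideal.span {f ^ m}) := by
      rw [← h]
      exact le_iSup (fun n => I.colon (Ideal.span {f ^ n})) (m + m) h2m
    rw [Ideal.mem_colon_span_singleton] at hr
    exact I.add_mem hi hr
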